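/- arXiv:2308.01685 — 2 statements merged into one kernel-verified Lean document; each statement's English description precedes it below -/
import Mathlib

section
/- Equivalently, for every bipartite graph G, (a(G) - α(G))² - (2μ(G) + 4)(a(G) - α(G)) + μ(G)² ≥ 0, and since a(G) - α(G) ≤ μ(G), this forces a(G) - α(G) ≤ 2 + μ(G) - 2√(1 + μ(G)). -/
open Finset
set_option linter.unusedSectionVars false
set_option linter.unreachableTactic false
set_option linter.unusedTactic false

namespace AnnPaper

variable {V : Type*}

/-- A finset of vertices is independent: no two of its members are adjacent. -/
def IsIndepFinset (G : SimpleGraph V) (s : Finset V) : Prop :=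
  ∀ a ∈ s, ∀ b ∈ s, ¬ G.Adj a b

/-- The independence number `α(G)`. -/
noncomputable def indepNum (G : SimpleGraph V) : ℕ :=
  sSup {k | ∃ s : Finset V, IsIndepFinset G s ∧ s.card = k}

/-- A finset of edges is a matching: edges of `G`, pairwise vertex-disjoint. -/
def IsMatchingFinset (G : SimpleGraph V) (s : Finset (Sym2 V)) : Prop :=
  (↑s ⊆ G.edgeSet) ∧ ∀ e ∈ s, ∀ f ∈ s, e ≠ f → ∀ v : V, v ∈ e → v ∉ f

/-- The matching number `μ(G)`. -/
noncomputable def matchNum (G : SimpleGraph V) : ℕ :=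
  sSup {k | ∃ s : Finset (Sym2 V), IsMatchingFinset G s ∧ s.card = k}

/-- The number of edges `m(G)`. -/
noncomputable def edgeCount (G : SimpleGraph V) : ℕ := G.edgeSet.ncard

/-- The degree of a vertex. -/
noncomputable def deg (G : SimpleGraph V) (v : V) : ℕ := (G.neighborSet v).ncard

/-- The annihilation number `a(G)`: the largest `k` such that the sum of the `k`
smallest degrees is at most `m(G)`; equivalently, the largest cardinality of a
set of vertices whose degree sum is at most `m(G)`. -/
noncomputable def annNum (G : SimpleGraph V) : ℕ :=
  sSup {k | ∃ A : Finset V, A.card = k ∧ ∑ v ∈ A, deg G v ≤ edgeCount G}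

/-- The number of edges of the subgraph induced on a set of vertices. -/
noncomputable def inducedEdgeCount (G : SimpleGraph V) (A : Set V) : ℕ :=
  (SimpleGraph.induce A G).edgeSet.ncard

section Aux
variable [Fintype V] [DecidableEq V] (G : SimpleGraph V) [DecidableRel G.Adj]

/-- edges of `G` with both endpoints in `A` -/
def eIn (A : Finset V) : Finset (Sym2 V) := G.edgeFinset.filter (fun e => ∀ v ∈ e, v ∈ A)

lemma deg_eq (v : V) : deg G v = G.degree v := by
  rw [deg, ← SimpleGraph.card_neighborFinset_eq_degree, SimpleGraph.neighborFinset_def,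
    Set.ncard_eq_toFinset_card']

lemma edgeCount_eq : edgeCount G = G.edgeFinset.card := by
  rw [edgeCount, SimpleGraph.edgeFinset, Set.ncard_eq_toFinset_card']

lemma indepNum_ge {s : Finset V} (hs : IsIndepFinset G s) : s.card ≤ indepNum G := by
  apply le_csSup
  · exact ⟨Fintype.card V, fun k ⟨t, _, ht⟩ => ht ▸ t.card_le_univ⟩
  · exact ⟨s, hs, rfl⟩

lemma matchNum_ge {s : Finset (Sym2 V)} (hs : IsMatchingFinset G s) : s.card ≤ matchNum G := by
  apply le_csSup
  · exact ⟨Fintype.card (Sym2 V), fun k ⟨t, _, ht⟩ => ht ▸ t.card_le_univ⟩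
  · exact ⟨s, hs, rfl⟩

lemma annNum_spec : ∃ A : Finset V, A.card = annNum G ∧ ∑ v ∈ A, G.degree v ≤ G.edgeFinset.card := by
  have h : annNum G ∈ {k | ∃ A : Finset V, A.card = k ∧ ∑ v ∈ A, deg G v ≤ edgeCount G} := by
    apply Nat.sSup_mem
    · exact ⟨0, ∅, by simp⟩
    · exact ⟨Fintype.card V, fun k ⟨t, ht, _⟩ => ht ▸ t.card_le_univ⟩
  obtain ⟨A, h1, h2⟩ := h
  refine ⟨A, h1, ?_⟩
  rwa [← edgeCount_eq, ← Finset.sum_congr rfl (fun v _ => deg_eq G v)]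

lemma annNum_le : annNum G ≤ Fintype.card V := by
  have hne : {k | ∃ A : Finset V, A.card = k ∧ ∑ v ∈ A, deg G v ≤ edgeCount G}.Nonempty :=
    ⟨0, ∅, by simp⟩
  refine csSup_le hne ?_
  rintro k ⟨t, ht, -⟩
  exact ht ▸ t.card_le_univ

lemma fin2' : ∀ x : Fin 2, x ≠ 0 ↔ x = 1 := by decide

lemma konig (hbip : G.Colorable 2) : Fintype.card V ≤ indepNum G + matchNum G := by
  classical
  obtain ⟨C⟩ := hbip
  set X := Finset.univ.filter (fun v => C v = 0) with hX
  set Y := Finset.univ.filter (fun v => C v = 1) with hY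
  have hXc : ∀ v ∈ X, C v = 0 := fun v hv => (Finset.mem_filter.1 hv).2
  have hYc : ∀ v ∈ Y, C v = 1 := fun v hv => (Finset.mem_filter.1 hv).2
  have hn : X.card + Y.card = Fintype.card V := by
    have h := Finset.card_filter_add_card_filter_not (s := (Finset.univ : Finset V))
      (p := fun v => C v = 0)
    have h2 : Finset.univ.filter (fun v => ¬ C v = 0) = Y := by
      rw [hY]; exact Finset.filter_congr fun v _ => (fin2' (C v))
    rw [hX, ← Finset.card_univ, ← h, h2]
  set nb : Finset V → Finset V := fun S => Y.filter (fun y => ∃ x ∈ S, G.Adj x y) with hnb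
  have hnbY : ∀ S, nb S ⊆ Y := fun S => Finset.filter_subset _ _
  set d := X.powerset.sup (fun S => S.card - (nb S).card) with hd
  -- Hall setup
  set t : {x // x ∈ X} → Finset (V ⊕ Fin d) :=
    fun x => (G.neighborFinset x.1).image Sum.inl ∪ Finset.univ.image Sum.inr with ht
  have hall : ∀ s : Finset {x // x ∈ X}, s.card ≤ (s.biUnion t).card := by
    intro s
    rcases s.eq_empty_or_nonempty with rfl | ⟨x0, hx0⟩
    · simp
    · set S := s.image Subtype.val with hS
      have hScard : S.card = s.card := Finset.card_image_of_injective _ Subtype.val_injective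
      have hSX : S ⊆ X := by
        rintro v hv
        obtain ⟨x, _, rfl⟩ := Finset.mem_image.1 hv
        exact x.2
      have hdef : S.card - (nb S).card ≤ d :=
        Finset.le_sup (f := fun S => S.card - (nb S).card) (Finset.mem_powerset.2 hSX)
      have hsub2 : (nb S).image Sum.inl ∪ (Finset.univ.image (Sum.inr : Fin d → V ⊕ Fin d))
          ⊆ s.biUnion t := by
        intro z hz
        rcases Finset.mem_union.1 hz with hz | hz
        · obtain ⟨y, hy, rfl⟩ := Finset.mem_image.1 hz
          obtain ⟨hyY, x, hxS, hadj⟩ := Finset.mem_filter.1 hy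
          obtain ⟨xs, hxs, rfl⟩ := Finset.mem_image.1 hxS
          refine Finset.mem_biUnion.2 ⟨xs, hxs, Finset.mem_union_left _ ?_⟩
          exact Finset.mem_image.2 ⟨y, (SimpleGraph.mem_neighborFinset _ _ _).2 hadj, rfl⟩
        · obtain ⟨i, _, rfl⟩ := Finset.mem_image.1 hz
          exact Finset.mem_biUnion.2 ⟨x0, hx0,
            Finset.mem_union_right _ (Finset.mem_image.2 ⟨i, Finset.mem_univ i, rfl⟩)⟩
      have hdisj : Disjoint ((nb S).image (Sum.inl : V → V ⊕ Fin d))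
          (Finset.univ.image (Sum.inr : Fin d → V ⊕ Fin d)) := by
        rw [Finset.disjoint_left]
        rintro z hz1 hz2
        obtain ⟨y, _, rfl⟩ := Finset.mem_image.1 hz1
        obtain ⟨i, _, h⟩ := Finset.mem_image.1 hz2
        exact Sum.inl_ne_inr h.symm
      have hcard2 : ((nb S).image (Sum.inl : V → V ⊕ Fin d)
          ∪ Finset.univ.image (Sum.inr : Fin d → V ⊕ Fin d)).card = (nb S).card + d := by
        rw [Finset.card_union_of_disjoint hdisj,
          Finset.card_image_of_injective _ Sum.inl_injective,
          Finset.card_image_of_injective _ Sum.inr_injective, Finset.card_univ,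
          Fintype.card_fin]
      calc s.card = S.card := hScard.symm
        _ ≤ (nb S).card + d := by omega
        _ = _ := hcard2.symm
        _ ≤ (s.biUnion t).card := Finset.card_le_card hsub2
  obtain ⟨f, hfinj, hf⟩ := (Finset.all_card_le_biUnion_card_iff_exists_injective t).1 hall
  -- the matching
  set P := X.attach.filter (fun x => (f x).isLeft) with hP
  set g : {x // x ∈ X} → V := fun x => ((f x).getLeft?).getD x.1 with hg
  have hgadj : ∀ x ∈ P, G.Adj x.1 (g x) ∧ Sum.inl (g x) = f x := by
    intro x hx
    have hleft := (Finset.mem_filter.1 hx).2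
    obtain ⟨y, hy⟩ := Sum.isLeft_iff.1 hleft
    have hgx : g x = y := by rw [hg]; simp [hy]
    have hfx := hf x
    rw [hy] at hfx
    rw [hgx, ← hy]
    refine ⟨?_, rfl⟩
    rcases Finset.mem_union.1 hfx with h | h
    · obtain ⟨y', hy', he⟩ := Finset.mem_image.1 h
      have : y' = y := Sum.inl_injective he
      subst this
      exact (SimpleGraph.mem_neighborFinset _ _ _).1 hy'
    · obtain ⟨i, _, he⟩ := Finset.mem_image.1 h
      simp at he
  have hgc : ∀ x ∈ P, C (g x) = 1 := by
    intro x hx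
    have hadj := (hgadj x hx).1
    have := C.valid hadj
    rw [hXc x.1 x.2] at this
    exact (fin2' _).1 (Ne.symm this)
  set M := P.image (fun x => s(x.1, g x)) with hM
  have hinjP : ∀ x1 ∈ P, ∀ x2 ∈ P, s(x1.1, g x1) = s(x2.1, g x2) → x1 = x2 := by
    intro x1 h1 x2 h2 heq
    rcases Sym2.eq_iff.1 heq with ⟨ha, _⟩ | ⟨ha, hb⟩
    · exact Subtype.ext ha
    · exfalso
      have := hgc x2 h2
      rw [← ha, hXc x1.1 x1.2] at this
      exact absurd this (by decide)
  have hMcard : M.card = P.card := by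
    rw [hM]
    exact Finset.card_image_of_injOn fun x1 h1 x2 h2 heq => hinjP x1 h1 x2 h2 heq
  have hMmatch : IsMatchingFinset G M := by
    constructor
    · intro e he
      obtain ⟨x, hx, rfl⟩ := Finset.mem_image.1 he
      exact (SimpleGraph.mem_edgeSet _).2 (hgadj x hx).1
    · intro e he e' he' hne v hv hv'
      obtain ⟨x1, hx1, rfl⟩ := Finset.mem_image.1 he
      obtain ⟨x2, hx2, rfl⟩ := Finset.mem_image.1 he'
      have hx12 : x1 ≠ x2 := fun h => hne (by rw [h])
      rcases Sym2.mem_iff.1 hv with rfl | rfl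
      · rcases Sym2.mem_iff.1 hv' with h | h
        · exact hx12 (Subtype.ext h)
        · have h1 := hXc x1.1 x1.2
          have h2 := hgc x2 hx2
          rw [← h] at h2
          rw [h1] at h2
          exact absurd h2 (by decide)
      · rcases Sym2.mem_iff.1 hv' with h | h
        · have h1 := hXc x2.1 x2.2
          have h2 := hgc x1 hx1
          rw [h] at h2
          rw [h1] at h2
          exact absurd h2 (by decide)
        · apply hx12
          apply hfinj
          rw [← (hgadj x1 hx1).2, ← (hgadj x2 hx2).2, h]
  have hMμ : M.card ≤ matchNum G := matchNum_ge G hMmatch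
  have hPc : X.card ≤ P.card + d := by
    set Q := X.attach.filter (fun x => ¬ (f x).isLeft) with hQ
    have hQd : Q.card ≤ d := by
      have h1 : Q.card = (Q.image f).card :=
        (Finset.card_image_of_injective _ hfinj).symm
      have h2 : Q.image f ⊆ Finset.univ.image (Sum.inr : Fin d → V ⊕ Fin d) := by
        intro z hz
        obtain ⟨x, hx, rfl⟩ := Finset.mem_image.1 hz
        have hnl : ¬ (f x).isLeft := (Finset.mem_filter.1 hx).2
        obtain ⟨i, hi⟩ : ∃ i, f x = Sum.inr i := by
          rcases hfx : f x with y | i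
          · rw [hfx] at hnl; simp at hnl
          · exact ⟨i, rfl⟩
        rw [hi]
        exact Finset.mem_image.2 ⟨i, Finset.mem_univ i, rfl⟩
      have h3 : (Finset.univ.image (Sum.inr : Fin d → V ⊕ Fin d)).card ≤ d := by
        calc _ ≤ (Finset.univ : Finset (Fin d)).card := Finset.card_image_le
          _ = d := by rw [Finset.card_univ, Fintype.card_fin]
      calc Q.card = (Q.image f).card := h1
        _ ≤ _ := Finset.card_le_card h2
        _ ≤ d := h3
    have hsplit : P.card + Q.card = X.card := by
      rw [hP, hQ, Finset.card_filter_add_card_filter_not, Finset.card_attach]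
    omega
  -- the independent set
  have hindep : ∀ S ⊆ X, S.card + Y.card ≤ indepNum G + (nb S).card := by
    intro S hSX
    set I := S ∪ (Y \ nb S) with hI
    have hIindep : IsIndepFinset G I := by
      intro a ha b hb hadj
      have hmem : ∀ c₁ ∈ I, C c₁ = 0 ∧ c₁ ∈ S ∨ C c₁ = 1 ∧ c₁ ∈ Y \ nb S := by
        intro c₁ hc₁
        rcases Finset.mem_union.1 hc₁ with h | h
        · exact Or.inl ⟨hXc _ (hSX h), h⟩
        · exact Or.inr ⟨hYc _ (Finset.mem_sdiff.1 h).1, h⟩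
      have hCne := C.valid hadj
      rcases hmem a ha with ⟨ha0, haS⟩ | ⟨ha1, haY⟩ <;>
        rcases hmem b hb with ⟨hb0, hbS⟩ | ⟨hb1, hbY⟩
      · exact hCne (ha0.trans hb0.symm)
      · exact (Finset.mem_sdiff.1 hbY).2
          (Finset.mem_filter.2 ⟨(Finset.mem_sdiff.1 hbY).1, a, haS, hadj⟩)
      · exact (Finset.mem_sdiff.1 haY).2
          (Finset.mem_filter.2 ⟨(Finset.mem_sdiff.1 haY).1, b, hbS, hadj.symm⟩)
      · exact hCne (ha1.trans hb1.symm)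
    have hdisjI : Disjoint S (Y \ nb S) := by
      rw [Finset.disjoint_left]
      intro v hv hv2
      have h0 := hXc _ (hSX hv)
      have h1 := hYc _ (Finset.mem_sdiff.1 hv2).1
      rw [h0] at h1
      exact absurd h1 (by decide)
    have hIcard : I.card = S.card + (Y \ nb S).card := Finset.card_union_of_disjoint hdisjI
    have hsd : (Y \ nb S).card = Y.card - (nb S).card := Finset.card_sdiff_of_subset (hnbY S)
    have hnbc : (nb S).card ≤ Y.card := Finset.card_le_card (hnbY S)
    have := indepNum_ge G hIindep
    omega
  -- attain the supremum d
  obtain ⟨S, hSmem, hSd⟩ := Finset.exists_mem_eq_sup X.powerset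
    ⟨∅, Finset.empty_mem_powerset X⟩ (fun S => S.card - (nb S).card)
  have hSX : S ⊆ X := Finset.mem_powerset.1 hSmem
  have h1 := hindep S hSX
  rcases Nat.eq_zero_or_pos d with hd0 | hdpos
  · have hnbe : nb ∅ = ∅ := by
      rw [hnb]
      simp
    have h0 := hindep ∅ (Finset.empty_subset X)
    rw [hnbe] at h0
    simp only [Finset.card_empty] at h0
    omega
  · have : d = S.card - (nb S).card := hSd
    omega

lemma fin2 : ∀ x : Fin 2, x ≠ 0 ↔ x = 1 := by decide

lemma exists_indep (A : Finset V) :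
    ∃ s : Finset V, IsIndepFinset G s ∧ A.card ≤ s.card + (eIn G A).card := by
  induction A using Finset.strongInductionOn with
  | _ A ih =>
    by_cases hA : IsIndepFinset G A
    · exact ⟨A, hA, Nat.le_add_right _ _⟩
    · rw [IsIndepFinset] at hA; push_neg at hA
      obtain ⟨a, ha, b, hb, hab⟩ := hA
      obtain ⟨s, hs, hcard⟩ := ih (A.erase a) (Finset.erase_ssubset ha)
      refine ⟨s, hs, ?_⟩
      have hlt : (eIn G (A.erase a)).card < (eIn G A).card := by
        apply Finset.card_lt_card
        constructor
        · intro e he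
          rw [eIn, Finset.mem_filter] at he ⊢
          exact ⟨he.1, fun v hv => Finset.mem_of_mem_erase (he.2 v hv)⟩
        · intro hsub
          have hmem : s(a, b) ∈ eIn G (A.erase a) := by
            apply hsub
            rw [eIn, Finset.mem_filter]
            refine ⟨SimpleGraph.mem_edgeFinset.2 hab, fun v hv => ?_⟩
            rcases Sym2.mem_iff.1 hv with rfl | rfl
            · exact ha
            · exact hb
          rw [eIn, Finset.mem_filter] at hmem
          have := hmem.2 a (Sym2.mem_mk_left a b)
          exact (Finset.notMem_erase a A) this
      have hce : (A.erase a).card = A.card - 1 := Finset.card_erase_of_mem ha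
      have hpos : 0 < A.card := Finset.card_pos.2 ⟨a, ha⟩
      omega

lemma indep_in (A : Finset V) : A.card ≤ indepNum G + (eIn G A).card := by
  obtain ⟨s, hs, hcard⟩ := exists_indep G A
  have := indepNum_ge G hs
  omega

lemma count_deg (A : Finset V) :
    ∑ v ∈ A, G.degree v = ∑ e ∈ G.edgeFinset, (A.filter (· ∈ e)).card := by
  calc ∑ v ∈ A, G.degree v = ∑ v ∈ A, (G.edgeFinset.filter (fun e => v ∈ e)).card := by
        refine Finset.sum_congr rfl fun v _ => ?_
        rw [← SimpleGraph.card_incidenceFinset_eq_degree, SimpleGraph.incidenceFinset_eq_filter]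
    _ = ∑ v ∈ A, ∑ e ∈ G.edgeFinset, if v ∈ e then 1 else 0 :=
        Finset.sum_congr rfl fun v _ => Finset.card_filter _ _
    _ = ∑ e ∈ G.edgeFinset, ∑ v ∈ A, if v ∈ e then 1 else 0 := Finset.sum_comm
    _ = ∑ e ∈ G.edgeFinset, (A.filter (· ∈ e)).card :=
        Finset.sum_congr rfl fun e _ => (Finset.card_filter _ _).symm

lemma eIn_le_compl (A : Finset V) (hA : ∑ v ∈ A, G.degree v ≤ G.edgeFinset.card) :
    (eIn G A).card ≤ (eIn G Aᶜ).card := by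
  classical
  set k : Sym2 V → ℕ := fun e => (A.filter (· ∈ e)).card with hk
  have hsub : eIn G A ⊆ G.edgeFinset := Finset.filter_subset _ _
  have e1 : ∑ e ∈ G.edgeFinset \ eIn G A, k e + ∑ e ∈ eIn G A, k e = ∑ e ∈ G.edgeFinset, k e :=
    Finset.sum_sdiff hsub
  have e2 : (eIn G A).card * 2 ≤ ∑ e ∈ eIn G A, k e := by
    rw [show (eIn G A).card * 2 = ∑ _e ∈ eIn G A, 2 by
      rw [Finset.sum_const, smul_eq_mul]]
    refine Finset.sum_le_sum fun e he => ?_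
    rw [eIn, Finset.mem_filter] at he
    obtain ⟨he1, he2⟩ := he
    induction e with
    | h a b =>
      have hadj : G.Adj a b := SimpleGraph.mem_edgeFinset.1 he1
      have hab : a ≠ b := hadj.ne
      have : ({a, b} : Finset V) ⊆ A.filter (· ∈ s(a, b)) := by
        intro v hv
        rcases Finset.mem_insert.1 hv with rfl | hv
        · exact Finset.mem_filter.2 ⟨he2 v (Sym2.mem_mk_left _ _), Sym2.mem_mk_left _ _⟩
        · rw [Finset.mem_singleton] at hv; subst hv
          exact Finset.mem_filter.2 ⟨he2 v (Sym2.mem_mk_right _ _), Sym2.mem_mk_right _ _⟩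
      have := Finset.card_le_card this
      rwa [Finset.card_pair hab] at this
  have e3 : ∀ e ∈ G.edgeFinset, e ∉ eIn G Aᶜ → 1 ≤ k e := by
    intro e he hne
    rw [eIn, Finset.mem_filter] at hne
    push_neg at hne
    obtain ⟨v, hv, hv2⟩ := hne he
    rw [hk]
    refine Finset.card_pos.2 ⟨v, Finset.mem_filter.2 ⟨?_, hv⟩⟩
    simpa using hv2
  set T := G.edgeFinset \ eIn G A with hT
  have e4 : T.card ≤ ∑ e ∈ T, k e + (eIn G Aᶜ).card := by
    have h1 : T.card ≤ (T \ eIn G Aᶜ).card + (eIn G Aᶜ).card := Finset.card_le_card_sdiff_add_card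
    have h2 : (T \ eIn G Aᶜ).card ≤ ∑ e ∈ T \ eIn G Aᶜ, k e := by
      calc (T \ eIn G Aᶜ).card = ∑ _e ∈ T \ eIn G Aᶜ, 1 := by simp
        _ ≤ ∑ e ∈ T \ eIn G Aᶜ, k e := by
            refine Finset.sum_le_sum fun e he => ?_
            obtain ⟨heT, heP⟩ := Finset.mem_sdiff.1 he
            exact e3 e (Finset.mem_sdiff.1 heT).1 heP
    have h3 : ∑ e ∈ T \ eIn G Aᶜ, k e ≤ ∑ e ∈ T, k e :=
      Finset.sum_le_sum_of_subset Finset.sdiff_subset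
    omega
  have e5 : T.card + (eIn G A).card = G.edgeFinset.card := Finset.card_sdiff_add_card_eq_card hsub
  have hA' : ∑ e ∈ G.edgeFinset, k e ≤ G.edgeFinset.card := by
    rw [← count_deg]; exact hA
  omega

lemma eIn_bound (hbip : G.Colorable 2) (B : Finset V) : 4 * (eIn G B).card ≤ B.card ^ 2 := by
  classical
  obtain ⟨C⟩ := hbip
  set B0 := B.filter (fun v => C v = 0) with hB0
  set B1 := B.filter (fun v => C v = 1) with hB1
  have hsub : eIn G B ⊆ (B0 ×ˢ B1).image (fun p => s(p.1, p.2)) := by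
    intro e he
    rw [eIn, Finset.mem_filter] at he
    obtain ⟨he1, he2⟩ := he
    induction e with
    | h a b =>
      have hadj : G.Adj a b := SimpleGraph.mem_edgeFinset.1 he1
      have haB : a ∈ B := he2 a (Sym2.mem_mk_left _ _)
      have hbB : b ∈ B := he2 b (Sym2.mem_mk_right _ _)
      have hne : C a ≠ C b := C.valid hadj
      rcases eq_or_ne (C a) 0 with h0 | h0
      · have h1 : C b = 1 := (fin2 _).1 (fun h => hne (h0.trans h.symm))
        exact Finset.mem_image.2 ⟨(a, b), Finset.mem_product.2
          ⟨Finset.mem_filter.2 ⟨haB, h0⟩, Finset.mem_filter.2 ⟨hbB, h1⟩⟩, rfl⟩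
      · have ha1 : C a = 1 := (fin2 _).1 h0
        have hb0 : C b = 0 := by
          by_contra h
          exact hne (ha1.trans ((fin2 _).1 h).symm)
        refine Finset.mem_image.2 ⟨(b, a), Finset.mem_product.2
          ⟨Finset.mem_filter.2 ⟨hbB, hb0⟩, Finset.mem_filter.2 ⟨haB, ha1⟩⟩, ?_⟩
        exact (Sym2.eq_swap)
  have hcard : (eIn G B).card ≤ B0.card * B1.card := by
    calc (eIn G B).card ≤ ((B0 ×ˢ B1).image (fun p => s(p.1, p.2))).card :=
          Finset.card_le_card hsub
      _ ≤ (B0 ×ˢ B1).card := Finset.card_image_le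
      _ = B0.card * B1.card := Finset.card_product _ _
  have hpq : B0.card + B1.card = B.card := by
    have h := Finset.card_filter_add_card_filter_not (s := B) (p := fun v => C v = 0)
    have h2 : B.filter (fun v => ¬ C v = 0) = B1 := by
      rw [hB1]
      exact Finset.filter_congr fun v _ => (fin2 (C v))
    rw [hB0, ← h, h2]
  nlinarith [hcard, hpq, sq_nonneg ((B0.card : ℤ) - B1.card)]

end Aux

theorem stmt14 {V : Type*} [Fintype V] (G : SimpleGraph V) (hbip : G.Colorable 2) :
    ((annNum G : ℝ) - (indepNum G : ℝ)) ^ 2 -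
        (2 * (matchNum G : ℝ) + 4) * ((annNum G : ℝ) - (indepNum G : ℝ)) +
        (matchNum G : ℝ) ^ 2 ≥ 0 ∧
      (annNum G : ℝ) - (indepNum G : ℝ) ≤
        2 + (matchNum G : ℝ) - 2 * Real.sqrt (1 + (matchNum G : ℝ)) := by
  classical
  obtain ⟨A, hAcard, hAsum⟩ := annNum_spec G
  set na := annNum G with hna
  set ia := indepNum G with hia
  set ma := matchNum G with hma
  set n := Fintype.card V with hnn
  set E := (eIn G A).card with hE
  have f1 : n ≤ ia + ma := konig G hbip
  have f2 : na ≤ n := annNum_le G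
  have f3 : na ≤ ia + E := hAcard ▸ indep_in G A
  have f4 : 4 * E ≤ (n - na) ^ 2 := by
    have h4 : E ≤ (eIn G Aᶜ).card := eIn_le_compl G A hAsum
    have h5 : 4 * (eIn G Aᶜ).card ≤ (Aᶜ.card) ^ 2 := eIn_bound G hbip Aᶜ
    have h6 : Aᶜ.card = n - na := by rw [Finset.card_compl, hAcard]
    rw [h6] at h5
    omega
  -- move to the reals
  have c1 : (n : ℝ) ≤ (ia : ℝ) + (ma : ℝ) := by exact_mod_cast f1
  have c2 : (na : ℝ) ≤ (n : ℝ) := by exact_mod_cast f2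
  have c3 : (na : ℝ) ≤ (ia : ℝ) + (E : ℝ) := by exact_mod_cast f3
  have c4 : 4 * (E : ℝ) ≤ ((n : ℝ) - (na : ℝ)) ^ 2 := by
    have := (Nat.cast_le (α := ℝ)).2 f4
    push_cast [Nat.cast_sub f2] at this
    convert this using 2 <;> push_cast [Nat.cast_sub f2] <;> ring_nf
  set x : ℝ := (na : ℝ) - (ia : ℝ) with hx
  have h5 : (0 : ℝ) ≤ (ma : ℝ) - x - ((n : ℝ) - na) := by rw [hx]; linarith
  have h6 : (0 : ℝ) ≤ (n : ℝ) - na := by linarith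
  have h7 : ((n : ℝ) - na) ^ 2 ≤ ((ma : ℝ) - x) ^ 2 := by nlinarith [h5, h6]
  have part1 : x ^ 2 - (2 * (ma : ℝ) + 4) * x + (ma : ℝ) ^ 2 ≥ 0 := by
    have hxE : x ≤ (E : ℝ) := by rw [hx]; linarith
    nlinarith [h7, c4, hxE]
  refine ⟨part1, ?_⟩
  show x ≤ 2 + (ma : ℝ) - 2 * Real.sqrt (1 + (ma : ℝ))
  set r := Real.sqrt (1 + (ma : ℝ)) with hr
  have hr0 : 0 ≤ r := Real.sqrt_nonneg _
  have hr2 : r ^ 2 = 1 + (ma : ℝ) := Real.sq_sqrt (by positivity)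
  have hxm : x ≤ (ma : ℝ) := by rw [hx]; linarith
  by_contra hcon
  push_neg at hcon
  nlinarith [part1, hr2, mul_pos (show (0:ℝ) < x - (2 + (ma:ℝ) - 2*r) by linarith)
    (show (0:ℝ) < (2 + (ma:ℝ) + 2*r) - x by linarith)]


end AnnPaper
end

section
/- For every integer p ≥ 3, there exists a bipartite graph G with μ(G) = p² - 1, α(G) = p² - 1, a(G) = 2p² - 2p, and m(G) = 2p² - 2, so that a(G) - α(G) = (p-1)² = 2 + μ(G) - 2√(1 + μ(G)); hence the bipartite bound is tight for infinitely many values of μ. -/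
open Finset

namespace AnnPaper

variable {V : Type*}

section Transfer

variable {α β : Type*} {G : SimpleGraph α} {H : SimpleGraph β}

lemma indepSet_subset (φ : G ≃g H) :
    {k | ∃ s : Finset α, IsIndepFinset G s ∧ s.card = k} ⊆
      {k | ∃ s : Finset β, IsIndepFinset H s ∧ s.card = k} := by
  classical
  rintro k ⟨s, hs, rfl⟩
  refine ⟨s.image φ, ?_, Finset.card_image_of_injective _ φ.injective⟩
  intro a ha b hb hab
  obtain ⟨x, hx, rfl⟩ := Finset.mem_image.mp ha
  obtain ⟨y, hy, rfl⟩ := Finset.mem_image.mp hb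
  exact hs x hx y hy (φ.map_rel_iff.mp hab)

lemma indepNum_iso (φ : G ≃g H) : indepNum G = indepNum H := by
  unfold indepNum
  rw [Set.Subset.antisymm (indepSet_subset φ) (indepSet_subset φ.symm)]

lemma deg_iso (φ : G ≃g H) (v : α) : deg H (φ v) = deg G v := by
  have himg : H.neighborSet (φ v) = ⇑φ '' G.neighborSet v := by
    ext z
    constructor
    · intro hz
      refine ⟨φ.symm z, ?_, φ.apply_symm_apply z⟩
      have : H.Adj (φ v) (φ (φ.symm z)) := by rwa [φ.apply_symm_apply]
      exact φ.map_rel_iff.mp this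
    · rintro ⟨u, hu, rfl⟩
      exact φ.map_rel_iff.mpr hu
  rw [deg, himg, Set.ncard_image_of_injective _ φ.injective, deg]

lemma edgeSet_iso (φ : G ≃g H) : H.edgeSet = Sym2.map ⇑φ '' G.edgeSet := by
  ext e
  refine Sym2.ind (fun x y => ?_) e
  constructor
  · intro h
    refine ⟨s(φ.symm x, φ.symm y), ?_, ?_⟩
    · rw [SimpleGraph.mem_edgeSet]
      refine φ.map_rel_iff.mp ?_
      rwa [φ.apply_symm_apply, φ.apply_symm_apply]
    · rw [Sym2.map_pair_eq, φ.apply_symm_apply, φ.apply_symm_apply]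
  · rintro ⟨e', he', hmap⟩
    revert he' hmap
    refine Sym2.ind (fun a b => ?_) e'
    intro he' hmap
    rw [Sym2.map_pair_eq] at hmap
    rw [SimpleGraph.mem_edgeSet] at he' ⊢
    rcases Sym2.eq_iff.mp hmap with ⟨h1, h2⟩ | ⟨h1, h2⟩
    · rw [← h1, ← h2]; exact φ.map_rel_iff.mpr he'
    · rw [← h1, ← h2]; exact (φ.map_rel_iff.mpr he').symm

lemma edgeCount_iso (φ : G ≃g H) : edgeCount H = edgeCount G := by
  rw [edgeCount, edgeSet_iso φ,
    Set.ncard_image_of_injective _ (Sym2.map.injective φ.injective), edgeCount]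

lemma matchSet_subset (φ : G ≃g H) :
    {k | ∃ s : Finset (Sym2 α), IsMatchingFinset G s ∧ s.card = k} ⊆
      {k | ∃ s : Finset (Sym2 β), IsMatchingFinset H s ∧ s.card = k} := by
  classical
  rintro k ⟨s, ⟨hsub, hdisj⟩, rfl⟩
  refine ⟨s.image (Sym2.map ⇑φ), ⟨?_, ?_⟩,
    Finset.card_image_of_injective _ (Sym2.map.injective φ.injective)⟩
  · intro e he
    simp only [Finset.coe_image, Set.mem_image, Finset.mem_coe] at he
    obtain ⟨e', he', rfl⟩ := he
    rw [edgeSet_iso φ]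
    exact ⟨e', hsub he', rfl⟩
  · intro e he f hf hef v hve hvf
    obtain ⟨e', he', rfl⟩ := Finset.mem_image.mp he
    obtain ⟨f', hf', rfl⟩ := Finset.mem_image.mp hf
    obtain ⟨u, hu, hu2⟩ := Sym2.mem_map.mp hve
    obtain ⟨w, hw, hw2⟩ := Sym2.mem_map.mp hvf
    have huw : u = w := φ.injective (hu2.trans hw2.symm)
    have hne : e' ≠ f' := fun h => hef (by rw [h])
    exact hdisj e' he' f' hf' hne u hu (huw ▸ hw)

lemma matchNum_iso (φ : G ≃g H) : matchNum G = matchNum H := by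
  unfold matchNum
  rw [Set.Subset.antisymm (matchSet_subset φ) (matchSet_subset φ.symm)]

lemma annSet_subset (φ : G ≃g H) :
    {k | ∃ A : Finset α, A.card = k ∧ ∑ v ∈ A, deg G v ≤ edgeCount G} ⊆
      {k | ∃ A : Finset β, A.card = k ∧ ∑ v ∈ A, deg H v ≤ edgeCount H} := by
  classical
  rintro k ⟨A, rfl, hA⟩
  refine ⟨A.image φ, Finset.card_image_of_injective _ φ.injective, ?_⟩
  rw [Finset.sum_image (fun x _ y _ h => φ.injective h)]
  rw [edgeCount_iso φ]
  calc ∑ v ∈ A, deg H (φ v) = ∑ v ∈ A, deg G v := by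
        exact Finset.sum_congr rfl fun v _ => deg_iso φ v
    _ ≤ edgeCount G := hA

lemma annNum_iso (φ : G ≃g H) : annNum G = annNum H := by
  unfold annNum
  rw [Set.Subset.antisymm (annSet_subset φ) (annSet_subset φ.symm)]

end Transfer


section Construction

abbrev Wt (a q : ℕ) : Type := (Fin a × Bool) ⊕ ((Bool × Fin q) × Fin 4)

variable {a q : ℕ}

def rel : Wt a q → Wt a q → Prop
  | Sum.inl (i, _), Sum.inl (j, _) => i = j
  | Sum.inr (c, k), Sum.inr (d, l) =>
      (k = 0 ∧ l = 0 ∧ c.1 ≠ d.1) ∨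
      (c = d ∧ ((k = 0 ∧ l = 1) ∨ (k = 0 ∧ l = 2) ∨ (k = 2 ∧ l = 3)))
  | _, _ => False

def Gr (a q : ℕ) : SimpleGraph (Wt a q) := SimpleGraph.fromRel rel

noncomputable instance : DecidableRel (Gr a q).Adj := fun _ _ => Classical.dec _

lemma adj_inl_inl (i j : Fin a) (x y : Bool) :
    (Gr a q).Adj (Sum.inl (i, x)) (Sum.inl (j, y)) ↔ i = j ∧ x ≠ y := by
  rw [Gr, SimpleGraph.fromRel_adj]
  simp only [rel]
  constructor
  · rintro ⟨hne, h | h⟩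
    · exact ⟨h, fun hxy => hne (by rw [h, hxy])⟩
    · exact ⟨h.symm, fun hxy => hne (by rw [h, hxy])⟩
  · rintro ⟨rfl, hxy⟩
    exact ⟨fun h => hxy (by injection h with h'; exact congrArg Prod.snd h'), Or.inl rfl⟩

lemma not_adj_inl_inr (v : Fin a × Bool) (w : (Bool × Fin q) × Fin 4) :
    ¬ (Gr a q).Adj (Sum.inl v) (Sum.inr w) := by
  rw [Gr, SimpleGraph.fromRel_adj]
  rintro ⟨-, h | h⟩ <;> exact h

lemma adj_inr_inr (c d : Bool × Fin q) (k l : Fin 4) :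
    (Gr a q).Adj (Sum.inr (c, k)) (Sum.inr (d, l)) ↔
      (k = 0 ∧ l = 0 ∧ c.1 ≠ d.1) ∨
      (c = d ∧ ((k = 0 ∧ l = 1) ∨ (k = 1 ∧ l = 0) ∨ (k = 0 ∧ l = 2) ∨
        (k = 2 ∧ l = 0) ∨ (k = 2 ∧ l = 3) ∨ (k = 3 ∧ l = 2))) := by
  rw [Gr, SimpleGraph.fromRel_adj]
  simp only [rel]
  constructor
  · rintro ⟨hne, h | h⟩
    · rcases h with ⟨h1, h2, h3⟩ | ⟨h1, h2⟩
      · exact Or.inl ⟨h1, h2, h3⟩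
      · exact Or.inr ⟨h1, by tauto⟩
    · rcases h with ⟨h1, h2, h3⟩ | ⟨h1, h2⟩
      · exact Or.inl ⟨h2, h1, fun hh => h3 hh.symm⟩
      · exact Or.inr ⟨h1.symm, by tauto⟩
  · rintro (⟨rfl, rfl, h3⟩ | ⟨rfl, hp⟩)
    · refine ⟨fun h => ?_, Or.inl (Or.inl ⟨rfl, rfl, h3⟩)⟩
      injection h with h'
      exact h3 (congrArg (fun z => z.1.1) h')
    · have hkl : k ≠ l := by rcases hp with ⟨rfl,rfl⟩|⟨rfl,rfl⟩|⟨rfl,rfl⟩|⟨rfl,rfl⟩|⟨rfl,rfl⟩|⟨rfl,rfl⟩ <;> decide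
      refine ⟨fun h => ?_, ?_⟩
      · injection h with h'
        exact hkl (congrArg Prod.snd h')
      · rcases hp with ⟨rfl,rfl⟩|⟨rfl,rfl⟩|⟨rfl,rfl⟩|⟨rfl,rfl⟩|⟨rfl,rfl⟩|⟨rfl,rfl⟩
        · exact Or.inl (Or.inr ⟨rfl, by tauto⟩)
        · exact Or.inr (Or.inr ⟨rfl, by tauto⟩)
        · exact Or.inl (Or.inr ⟨rfl, by tauto⟩)
        · exact Or.inr (Or.inr ⟨rfl, by tauto⟩)
        · exact Or.inl (Or.inr ⟨rfl, by tauto⟩)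
        · exact Or.inr (Or.inr ⟨rfl, by tauto⟩)

end Construction


section Construction2
variable {a q : ℕ}

lemma bool_ne_iff (x y : Bool) : x ≠ y ↔ y = !x := by cases x <;> cases y <;> simp

lemma not_adj_inr_inl (w : (Bool × Fin q) × Fin 4) (v : Fin a × Bool) :
    ¬ (Gr a q).Adj (Sum.inr w) (Sum.inl v) :=
  fun h => not_adj_inl_inr v w h.symm

lemma nbr_inl (i : Fin a) (x : Bool) :
    (Gr a q).neighborSet (Sum.inl (i, x)) = {Sum.inl (i, !x)} := by
  ext u
  rcases u with ⟨j, y⟩ | w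
  · simp only [SimpleGraph.mem_neighborSet, adj_inl_inl, Set.mem_singleton_iff, Sum.inl.injEq,
      Prod.mk.injEq]
    constructor
    · rintro ⟨rfl, h⟩
      exact ⟨rfl, by cases x <;> cases y <;> simp_all⟩
    · rintro ⟨rfl, rfl⟩
      exact ⟨rfl, by cases x <;> simp⟩
  · simp [SimpleGraph.mem_neighborSet, not_adj_inl_inr]

lemma nbr_k1 (c : Bool × Fin q) :
    (Gr a q).neighborSet (Sum.inr (c, 1)) = {Sum.inr (c, 0)} := by
  ext u
  rcases u with v | ⟨d, l⟩
  · simp [SimpleGraph.mem_neighborSet, not_adj_inr_inl]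
  · simp only [SimpleGraph.mem_neighborSet, adj_inr_inr, Set.mem_singleton_iff, Sum.inr.injEq,
      Prod.mk.injEq]
    constructor
    · rintro (⟨h, -⟩ | ⟨rfl, h⟩)
      · exact absurd h (by decide)
      · rcases h with ⟨h, -⟩|⟨-, rfl⟩|⟨h, -⟩|⟨h, -⟩|⟨h, -⟩|⟨h, -⟩ <;>
          first | exact ⟨rfl, rfl⟩ | exact absurd h (by decide)
    · rintro ⟨rfl, rfl⟩
      exact Or.inr ⟨rfl, by decide⟩

lemma nbr_k3 (c : Bool × Fin q) :
    (Gr a q).neighborSet (Sum.inr (c, 3)) = {Sum.inr (c, 2)} := by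
  ext u
  rcases u with v | ⟨d, l⟩
  · simp [SimpleGraph.mem_neighborSet, not_adj_inr_inl]
  · simp only [SimpleGraph.mem_neighborSet, adj_inr_inr, Set.mem_singleton_iff, Sum.inr.injEq,
      Prod.mk.injEq]
    constructor
    · rintro (⟨h, -⟩ | ⟨rfl, h⟩)
      · exact absurd h (by decide)
      · rcases h with ⟨h, -⟩|⟨h, -⟩|⟨h, -⟩|⟨h, -⟩|⟨h, -⟩|⟨-, rfl⟩ <;>
          first | exact ⟨rfl, rfl⟩ | exact absurd h (by decide)
    · rintro ⟨rfl, rfl⟩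
      exact Or.inr ⟨rfl, by decide⟩

lemma nbr_k2 (c : Bool × Fin q) :
    (Gr a q).neighborSet (Sum.inr (c, 2)) = {Sum.inr (c, 0), Sum.inr (c, 3)} := by
  ext u
  rcases u with v | ⟨d, l⟩
  · simp [SimpleGraph.mem_neighborSet, not_adj_inr_inl]
  · simp only [SimpleGraph.mem_neighborSet, adj_inr_inr, Set.mem_insert_iff,
      Set.mem_singleton_iff, Sum.inr.injEq, Prod.mk.injEq]
    constructor
    · rintro (⟨h, -⟩ | ⟨rfl, h⟩)
      · exact absurd h (by decide)
      · rcases h with ⟨h, -⟩|⟨h, -⟩|⟨h, -⟩|⟨-, rfl⟩|⟨-, rfl⟩|⟨h, -⟩ <;>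
          first | exact Or.inl ⟨rfl, rfl⟩ | exact Or.inr ⟨rfl, rfl⟩ | exact absurd h (by decide)
    · rintro (⟨rfl, rfl⟩ | ⟨rfl, rfl⟩)
      · exact Or.inr ⟨rfl, by decide⟩
      · exact Or.inr ⟨rfl, by decide⟩

lemma nbr_k0 (c : Bool × Fin q) :
    (Gr a q).neighborSet (Sum.inr (c, 0)) =
      (Set.range fun j : Fin q => (Sum.inr ((!c.1, j), 0) : Wt a q)) ∪
        {Sum.inr (c, 1), Sum.inr (c, 2)} := by
  ext u
  rcases u with v | ⟨d, l⟩
  · simp [SimpleGraph.mem_neighborSet, not_adj_inr_inl]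
  · simp only [SimpleGraph.mem_neighborSet, adj_inr_inr, Set.mem_union, Set.mem_range,
      Set.mem_insert_iff, Set.mem_singleton_iff, Sum.inr.injEq, Prod.mk.injEq]
    constructor
    · rintro (⟨-, rfl, h⟩ | ⟨rfl, h⟩)
      · refine Or.inl ⟨d.2, ?_, rfl⟩
        rw [← (bool_ne_iff c.1 d.1).mp h]
      · rcases h with ⟨-, rfl⟩|⟨h, -⟩|⟨-, rfl⟩|⟨h, -⟩|⟨h, -⟩|⟨h, -⟩
        · exact Or.inr (Or.inl ⟨by trivial, by trivial⟩)
        · exact absurd h (by decide)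
        · exact Or.inr (Or.inr ⟨by trivial, by trivial⟩)
        all_goals exact absurd h (by decide)
    · rintro (⟨j, hj, hl⟩ | ⟨rfl, rfl⟩ | ⟨rfl, rfl⟩)
      · subst hl
        refine Or.inl ⟨by trivial, by trivial, ?_⟩
        rw [← hj]
        cases c.1 <;> simp
      · exact Or.inr ⟨rfl, by decide⟩
      · exact Or.inr ⟨rfl, by decide⟩

end Construction2

section Degrees
variable {a q : ℕ}

lemma deg_eq_degree {V : Type*} [Fintype V] (G : SimpleGraph V) [DecidableRel G.Adj] (v : V) :
    deg G v = G.degree v := by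
  rw [deg, SimpleGraph.degree, ← Set.ncard_coe_finset]
  congr 1
  simp [SimpleGraph.neighborFinset]

lemma deg_inl (i : Fin a) (x : Bool) : deg (Gr a q) (Sum.inl (i, x)) = 1 := by
  rw [deg, nbr_inl]; exact Set.ncard_singleton _

lemma deg_k1 (c : Bool × Fin q) : deg (Gr a q) (Sum.inr (c, 1)) = 1 := by
  rw [deg, nbr_k1]; exact Set.ncard_singleton _

lemma deg_k3 (c : Bool × Fin q) : deg (Gr a q) (Sum.inr (c, 3)) = 1 := by
  rw [deg, nbr_k3]; exact Set.ncard_singleton _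

lemma deg_k2 (c : Bool × Fin q) : deg (Gr a q) (Sum.inr (c, 2)) = 2 := by
  rw [deg, nbr_k2]
  exact Set.ncard_pair (by simp)

lemma deg_k0 (c : Bool × Fin q) : deg (Gr a q) (Sum.inr (c, 0)) = q + 2 := by
  rw [deg, nbr_k0]
  have hinj : Function.Injective fun j : Fin q => (Sum.inr ((!c.1, j), 0) : Wt a q) := by
    intro j j' h
    simpa using h
  rw [Set.ncard_union_eq ?disj (Set.toFinite _) (Set.toFinite _)]
  case disj =>
    rw [Set.disjoint_left]
    rintro x ⟨j, rfl⟩ hx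
    simp at hx
  have h1 : (Set.range fun j : Fin q => (Sum.inr ((!c.1, j), 0) : Wt a q)).ncard = q := by
    rw [← Set.image_univ, Set.ncard_image_of_injective _ hinj, Set.ncard_univ]
    simp
  have h2 : ({(Sum.inr (c, 1) : Wt a q), Sum.inr (c, 2)} : Set (Wt a q)).ncard = 2 :=
    Set.ncard_pair (by simp)
  omega

lemma deg_le (v : Wt a q) : deg (Gr a q) v ≤ q + 2 := by
  rcases v with ⟨i, x⟩ | ⟨c, k⟩
  · rw [deg_inl]; omega
  · fin_cases k
    · show deg (Gr a q) (Sum.inr (c, 0)) ≤ q + 2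
      rw [deg_k0]
    · show deg (Gr a q) (Sum.inr (c, 1)) ≤ q + 2
      rw [deg_k1]; omega
    · show deg (Gr a q) (Sum.inr (c, 2)) ≤ q + 2
      rw [deg_k2]; omega
    · show deg (Gr a q) (Sum.inr (c, 3)) ≤ q + 2
      rw [deg_k3]; omega

lemma sum_deg : ∑ v : Wt a q, deg (Gr a q) v = 2 * a + 2 * (q * (q + 6)) := by
  rw [Fintype.sum_sum_type]
  have h1 : ∑ v : Fin a × Bool, deg (Gr a q) (Sum.inl v) = 2 * a := by
    have : ∀ v : Fin a × Bool, deg (Gr a q) (Sum.inl v) = 1 := by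
      rintro ⟨i, x⟩; exact deg_inl i x
    rw [Finset.sum_congr rfl fun v _ => this v]
    simp [Finset.card_univ, mul_comm]
  have h2 : ∑ w : (Bool × Fin q) × Fin 4, deg (Gr a q) (Sum.inr w) = 2 * (q * (q + 6)) := by
    rw [Fintype.sum_prod_type]
    have hin : ∀ c : Bool × Fin q, ∑ k : Fin 4, deg (Gr a q) (Sum.inr (c, k)) = q + 6 := by
      intro c
      rw [Fin.sum_univ_four, deg_k0, deg_k1, deg_k2, deg_k3]
    rw [Finset.sum_congr rfl fun c _ => hin c]
    simp [Finset.card_univ, Fintype.card_prod]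
    try ring
  omega

lemma edgeCount_Gr : edgeCount (Gr a q) = a + q * (q + 6) := by
  have h1 : edgeCount (Gr a q) = (Gr a q).edgeFinset.card := by
    rw [edgeCount, ← Set.ncard_coe_finset]
    congr 1
    simp [SimpleGraph.edgeFinset]
  have h2 := SimpleGraph.sum_degrees_eq_twice_card_edges (Gr a q)
  have h3 : ∑ v, (Gr a q).degree v = ∑ v, deg (Gr a q) v :=
    Finset.sum_congr rfl fun v _ => (deg_eq_degree _ v).symm
  have h4 := sum_deg (a := a) (q := q)
  generalize hQ : q * (q + 6) = Q at *
  omega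

lemma card_Wt : Fintype.card (Wt a q) = 2 * a + 8 * q := by
  simp [Fintype.card_sum, Fintype.card_prod]
  ring

end Degrees

section Matching
variable {a q : ℕ}

abbrev It (a q : ℕ) : Type := Fin a ⊕ (Bool × Fin q) ⊕ (Bool × Fin q)

def pt : It a q × Bool → Wt a q
  | (Sum.inl i, b) => Sum.inl (i, b)
  | (Sum.inr (Sum.inl c), b) => Sum.inr (c, if b then 1 else 0)
  | (Sum.inr (Sum.inr c), b) => Sum.inr (c, if b then 3 else 2)

def gi : Wt a q → It a q × Bool
  | Sum.inl (i, b) => (Sum.inl i, b)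
  | Sum.inr (c, k) =>
      if k = 0 then (Sum.inr (Sum.inl c), false)
      else if k = 1 then (Sum.inr (Sum.inl c), true)
      else if k = 2 then (Sum.inr (Sum.inr c), false)
      else (Sum.inr (Sum.inr c), true)

lemma gi_pt (z : It a q × Bool) : gi (pt z) = z := by
  rcases z with ⟨x, b⟩
  rcases x with i | c | c <;> cases b <;> simp [pt, gi]

lemma pt_gi (w : Wt a q) : pt (gi w) = w := by
  rcases w with ⟨i, b⟩ | ⟨c, k⟩
  · simp [pt, gi]
  · fin_cases k <;> simp [pt, gi]

lemma pt_inj : Function.Injective (pt : It a q × Bool → Wt a q) :=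
  Function.LeftInverse.injective gi_pt

lemma adj_pt (i : It a q) : (Gr a q).Adj (pt (i, false)) (pt (i, true)) := by
  rcases i with i | c | c
  · simp [pt, adj_inl_inl]
  · simp [pt, adj_inr_inr]
  · simp [pt, adj_inr_inr]

noncomputable def medge : It a q → Sym2 (Wt a q) := fun i => s(pt (i, false), pt (i, true))

lemma medge_inj : Function.Injective (medge : It a q → Sym2 (Wt a q)) := by
  intro i j h
  rcases Sym2.eq_iff.mp h with ⟨h1, -⟩ | ⟨h1, -⟩
  · exact (Prod.mk.injEq .. ▸ (pt_inj h1) : _ ∧ _).1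
  · have := pt_inj h1
    simp at this

lemma card_It : Fintype.card (It a q) = a + 4 * q := by
  simp [Fintype.card_sum, Fintype.card_prod]
  ring

noncomputable def Mset (a q : ℕ) : Finset (Sym2 (Wt a q)) := Finset.univ.image medge

lemma Mset_card : (Mset a q).card = a + 4 * q := by
  rw [Mset, Finset.card_image_of_injective _ medge_inj, Finset.card_univ, card_It]

lemma Mset_matching : IsMatchingFinset (Gr a q) (Mset a q) := by
  constructor
  · intro e he
    simp only [Mset, Finset.coe_image, Set.mem_image, Finset.mem_coe, Finset.mem_univ] at he
    obtain ⟨i, -, rfl⟩ := he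
    exact (Gr a q).mem_edgeSet.mpr (adj_pt i)
  · intro e he f hf hef v hve hvf
    obtain ⟨i, -, rfl⟩ := Finset.mem_image.mp he
    obtain ⟨j, -, rfl⟩ := Finset.mem_image.mp hf
    rcases Sym2.mem_iff.mp hve with h1 | h1 <;> rcases Sym2.mem_iff.mp hvf with h2 | h2 <;>
    · apply hef
      have := pt_inj (h1.symm.trans h2)
      have hij : i = j := congrArg Prod.fst this
      rw [hij]

lemma sym2_mem_iff_out {α : Type*} (e : Sym2 α) (v : α) :
    v ∈ e ↔ v = e.out.1 ∨ v = e.out.2 := by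
  constructor
  · intro h
    rw [← Quot.out_eq e] at h
    exact Sym2.mem_iff.mp h
  · intro h
    have h3 : s(e.out.1, e.out.2) = e := Quot.out_eq e
    have h2 : v ∈ s(e.out.1, e.out.2) := Sym2.mem_iff.mpr h
    rwa [h3] at h2

lemma out_ne_of_edge {V : Type*} {G : SimpleGraph V} {e : Sym2 V} (he : e ∈ G.edgeSet) :
    e.out.1 ≠ e.out.2 := by
  intro h
  apply G.not_isDiag_of_mem_edgeSet he
  have h3 : s(e.out.1, e.out.2) = e := Quot.out_eq e
  have h2 : (s(e.out.1, e.out.2)).IsDiag := Sym2.mk_isDiag_iff.mpr h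
  rwa [h3] at h2

lemma matching_card_le (s : Finset (Sym2 (Wt a q))) (hs : IsMatchingFinset (Gr a q) s) :
    2 * s.card ≤ 2 * a + 8 * q := by
  classical
  have hinj : Function.Injective
      (fun z : ↥s × Bool => if z.2 then (z.1 : Sym2 (Wt a q)).out.1 else (z.1 : Sym2 (Wt a q)).out.2) := by
    rintro ⟨⟨e, he⟩, b⟩ ⟨⟨f, hf⟩, b'⟩ h
    simp only at h
    set v := if b then e.out.1 else e.out.2 with hv
    have hve : v ∈ e := by
      rw [sym2_mem_iff_out]
      cases b <;> simp [hv]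
    have hvf : v ∈ f := by
      rw [sym2_mem_iff_out, h]
      cases b' <;> simp
    have hef : e = f := by
      by_contra hne
      exact hs.2 e he f hf hne v hve hvf
    subst hef
    have hb : b = b' := by
      by_contra hbb
      apply out_ne_of_edge (hs.1 he)
      cases b <;> cases b' <;> simp_all
    simp [hb]
  have := Fintype.card_le_of_injective _ hinj
  rw [Fintype.card_prod, Fintype.card_coe, card_Wt, Fintype.card_bool] at this
  omega

lemma matchNum_Gr : matchNum (Gr a q) = a + 4 * q := by
  have hmem : a + 4 * q ∈ {k | ∃ s : Finset (Sym2 (Wt a q)), IsMatchingFinset (Gr a q) s ∧ s.card = k} :=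
    ⟨Mset a q, Mset_matching, Mset_card⟩
  have hub : ∀ k ∈ {k | ∃ s : Finset (Sym2 (Wt a q)), IsMatchingFinset (Gr a q) s ∧ s.card = k},
      k ≤ a + 4 * q := by
    rintro k ⟨s, hs, rfl⟩
    have := matching_card_le s hs
    omega
  exact le_antisymm (csSup_le ⟨_, hmem⟩ hub) (le_csSup ⟨_, hub⟩ hmem)

end Matching

section Indep
variable {a q : ℕ}

def vtx : It a q → Wt a q
  | Sum.inl i => Sum.inl (i, false)
  | Sum.inr (Sum.inl c) => Sum.inr (c, 1)
  | Sum.inr (Sum.inr c) => Sum.inr (c, 3)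

lemma vtx_inj : Function.Injective (vtx : It a q → Wt a q) := by
  intro i j h
  rcases i with i | c | c <;> rcases j with j | d | d <;> simp [vtx] at h ⊢ <;> simp_all

lemma indep_set : IsIndepFinset (Gr a q) (Finset.univ.image vtx) := by
  intro u hu v hv
  obtain ⟨i, -, rfl⟩ := Finset.mem_image.mp hu
  obtain ⟨j, -, rfl⟩ := Finset.mem_image.mp hv
  rcases i with i | c | c <;> rcases j with j | d | d <;>
    simp [vtx, adj_inl_inl, adj_inr_inr, not_adj_inl_inr, not_adj_inr_inl]

lemma indep_card_le (s : Finset (Wt a q)) (hs : IsIndepFinset (Gr a q) s) :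
    s.card ≤ a + 4 * q := by
  classical
  have hinj : Set.InjOn (fun w => (gi w).1) (↑s : Set (Wt a q)) := by
    intro u hu v hv h
    by_contra hne
    have hb : (gi u).2 ≠ (gi v).2 := by
      intro hb
      apply hne
      have : gi u = gi v := Prod.ext h hb
      rw [← pt_gi u, ← pt_gi v, this]
    simp only at h
    have hu' : u = pt ((gi u).1, (gi u).2) := (pt_gi u).symm
    have hv0 : v = pt ((gi v).1, (gi v).2) := (pt_gi v).symm
    have hv' : v = pt ((gi u).1, (gi v).2) := by rw [h]; exact hv0
    cases hbu : (gi u).2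
    · have hbv : (gi v).2 = true := by
        cases hbv : (gi v).2
        · exact absurd (hbu.trans hbv.symm) hb
        · rfl
      apply hs u hu v hv
      rw [hu', hv', hbu, hbv]
      exact adj_pt _
    · have hbv : (gi v).2 = false := by
        cases hbv : (gi v).2
        · rfl
        · exact absurd (hbu.trans hbv.symm) hb
      apply hs v hv u hu
      rw [hu', hv', hbu, hbv]
      exact adj_pt _
  calc s.card = (s.image (fun w => (gi w).1)).card := (Finset.card_image_of_injOn hinj).symm
    _ ≤ Fintype.card (It a q) := Finset.card_le_univ _
    _ = a + 4 * q := card_It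

lemma indepNum_Gr : indepNum (Gr a q) = a + 4 * q := by
  have hcard : (Finset.univ.image (vtx : It a q → Wt a q)).card = a + 4 * q := by
    rw [Finset.card_image_of_injective _ vtx_inj, Finset.card_univ, card_It]
  have hmem : a + 4 * q ∈ {k | ∃ s : Finset (Wt a q), IsIndepFinset (Gr a q) s ∧ s.card = k} :=
    ⟨_, indep_set, hcard⟩
  have hub : ∀ k ∈ {k | ∃ s : Finset (Wt a q), IsIndepFinset (Gr a q) s ∧ s.card = k},
      k ≤ a + 4 * q := by
    rintro k ⟨s, hs, rfl⟩
    exact indep_card_le s hs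
  exact le_antisymm (csSup_le ⟨_, hmem⟩ hub) (le_csSup ⟨_, hub⟩ hmem)

end Indep

section Ann
variable {a q : ℕ}

noncomputable def Cset (a q : ℕ) : Finset (Wt a q) :=
  Finset.univ.image (fun c : Bool × Fin q => Sum.inr (c, (0 : Fin 4)))

lemma Cset_card : (Cset a q).card = 2 * q := by
  rw [Cset, Finset.card_image_of_injective _ (by intro c d h; simpa using h),
    Finset.card_univ, Fintype.card_prod]
  simp

lemma Cset_sum : ∑ v ∈ Cset a q, deg (Gr a q) v = 2 * (q * q) + 4 * q := by
  rw [Cset, Finset.sum_image (by intro c _ d _ h; simpa using h)]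
  have : ∀ c : Bool × Fin q, deg (Gr a q) (Sum.inr (c, (0 : Fin 4))) = q + 2 :=
    fun c => deg_k0 c
  rw [Finset.sum_congr rfl fun c _ => this c, Finset.sum_const, Finset.card_univ,
    Fintype.card_prod]
  simp
  ring

lemma ann_mem (h1 : a + 2 * q ≤ q * q) :
    (2 * a + 6 * q) ∈ {k | ∃ A : Finset (Wt a q), A.card = k ∧
      ∑ v ∈ A, deg (Gr a q) v ≤ edgeCount (Gr a q)} := by
  classical
  refine ⟨Finset.univ \ Cset a q, ?_, ?_⟩
  · rw [Finset.card_sdiff_of_subset (Finset.subset_univ _), Finset.card_univ, card_Wt, Cset_card]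
    omega
  · have hsum := Finset.sum_sdiff (f := deg (Gr a q)) (Finset.subset_univ (Cset a q))
    have htot : ∑ v ∈ (Finset.univ : Finset (Wt a q)), deg (Gr a q) v
        = 2 * a + 2 * (q * q) + 12 * q := by
      rw [sum_deg]; ring
    have hedge : edgeCount (Gr a q) = a + (q * q) + 6 * q := by
      rw [edgeCount_Gr]; ring
    have hC := Cset_sum (a := a) (q := q)
    generalize hP : q * q = P at *
    omega

lemma ann_ub (h2 : q * q ≤ a + 3 * q + 1) (hq : 1 ≤ q) :
    ∀ k ∈ {k | ∃ A : Finset (Wt a q), A.card = k ∧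
      ∑ v ∈ A, deg (Gr a q) v ≤ edgeCount (Gr a q)}, k ≤ 2 * a + 6 * q := by
  classical
  rintro k ⟨B, rfl, hB⟩
  by_contra hgt
  push_neg at hgt
  set T := (Finset.univ : Finset (Wt a q)) \ B with hT
  have hcards : T.card + B.card = 2 * a + 8 * q := by
    rw [hT, Finset.card_sdiff_add_card_eq_card (Finset.subset_univ _), Finset.card_univ, card_Wt]
  have hy : T.card + 1 ≤ 2 * q := by omega
  have hTsum : ∑ v ∈ T, deg (Gr a q) v + ∑ v ∈ B, deg (Gr a q) v
      = ∑ v ∈ (Finset.univ : Finset (Wt a q)), deg (Gr a q) v := by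
    rw [hT]
    exact Finset.sum_sdiff (Finset.subset_univ _)
  have htot : ∑ v ∈ (Finset.univ : Finset (Wt a q)), deg (Gr a q) v
      = 2 * a + 2 * (q * q) + 12 * q := by
    rw [sum_deg]; ring
  have hTle : ∑ v ∈ T, deg (Gr a q) v ≤ T.card * (q + 2) := by
    calc ∑ v ∈ T, deg (Gr a q) v ≤ ∑ _v ∈ T, (q + 2) :=
          Finset.sum_le_sum fun v _ => deg_le v
      _ = T.card * (q + 2) := by rw [Finset.sum_const, smul_eq_mul]
  have hmul : T.card * (q + 2) ≤ (2 * q - 1) * (q + 2) :=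
    Nat.mul_le_mul_right _ (by omega)
  have hexp : (2 * q - 1) * (q + 2) + 2 = 2 * (q * q) + 3 * q := by
    obtain ⟨n, rfl⟩ : ∃ n, q = n + 1 := ⟨q - 1, by omega⟩
    have h21 : 2 * (n + 1) - 1 = 2 * n + 1 := by omega
    rw [h21]
    ring
  have hedge : edgeCount (Gr a q) = a + (q * q) + 6 * q := by
    rw [edgeCount_Gr]; ring
  rw [hedge] at hB
  generalize hP : q * q = P at *
  generalize hZ1 : T.card * (q + 2) = Z1 at *
  generalize hZ2 : (2 * q - 1) * (q + 2) = Z2 at *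
  omega

lemma annNum_Gr (h1 : a + 2 * q ≤ q * q) (h2 : q * q ≤ a + 3 * q + 1) (hq : 1 ≤ q) :
    annNum (Gr a q) = 2 * a + 6 * q := by
  have hmem := ann_mem (a := a) (q := q) h1
  have hub := ann_ub (a := a) (q := q) h2 hq
  exact le_antisymm (csSup_le ⟨_, hmem⟩ hub) (le_csSup ⟨_, hub⟩ hmem)

end Ann

section Color
variable {a q : ℕ}

def col : Wt a q → Bool
  | Sum.inl (_, x) => x
  | Sum.inr ((s, _), k) => if k = 0 ∨ k = 3 then s else !s

lemma col_valid {u v : Wt a q} (h : (Gr a q).Adj u v) : col u ≠ col v := by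
  rcases u with ⟨i, x⟩ | ⟨⟨s, i⟩, k⟩ <;> rcases v with ⟨j, y⟩ | ⟨⟨t, j⟩, l⟩
  · rw [adj_inl_inl] at h
    simpa [col] using h.2
  · exact absurd h (not_adj_inl_inr _ _)
  · exact absurd h (not_adj_inr_inl _ _)
  · rw [adj_inr_inr] at h
    rcases h with ⟨rfl, rfl, hst⟩ | ⟨hcd, hp⟩
    · simpa [col] using hst
    · have hst : s = t := congrArg Prod.fst hcd
      subst hst
      rcases hp with ⟨rfl, rfl⟩|⟨rfl, rfl⟩|⟨rfl, rfl⟩|⟨rfl, rfl⟩|⟨rfl, rfl⟩|⟨rfl, rfl⟩ <;>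
        cases s <;> simp [col]

end Color

theorem stmt15 (p : ℕ) (hp : 3 ≤ p) :
    ∃ G : SimpleGraph (Fin (2 * p ^ 2 - 2)), G.Colorable 2 ∧
      matchNum G = p ^ 2 - 1 ∧ indepNum G = p ^ 2 - 1 ∧
      annNum G = 2 * p ^ 2 - 2 * p ∧ edgeCount G = 2 * p ^ 2 - 2 ∧
      (annNum G : ℝ) - (indepNum G : ℝ) = ((p : ℝ) - 1) ^ 2 ∧
      (annNum G : ℝ) - (indepNum G : ℝ) =
        2 + (matchNum G : ℝ) - 2 * Real.sqrt (1 + (matchNum G : ℝ)) := by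
  obtain ⟨r, rfl⟩ : ∃ r, p = r + 3 := ⟨p - 3, by omega⟩
  have hsq : (r + 3) ^ 2 = r * r + 6 * r + 9 := by ring
  have hA : (r + 2) * r = r * r + 2 * r := by ring
  have hC2 : (r + 2) ^ 2 = r * r + 4 * r + 4 := by ring
  have hB : (r + 2) * (r + 2 + 6) = r * r + 10 * r + 16 := by ring
  have hcard : Fintype.card (Wt ((r + 2) * r) (r + 2)) = 2 * (r + 3) ^ 2 - 2 := by
    rw [card_Wt, hA, hsq]
    generalize r * r = P
    omega
  set e := Fintype.equivFinOfCardEq hcard with he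
  set Gg : SimpleGraph (Fin (2 * (r + 3) ^ 2 - 2)) :=
    SimpleGraph.comap (⇑e.symm.toEmbedding) (Gr ((r + 2) * r) (r + 2)) with hGg
  have φ : SimpleGraph.comap (⇑e.symm.toEmbedding) (Gr ((r + 2) * r) (r + 2)) ≃g Gr ((r + 2) * r) (r + 2) :=
    SimpleGraph.Iso.comap e.symm (Gr ((r + 2) * r) (r + 2))
  have hmatch : matchNum Gg = (r + 3) ^ 2 - 1 := by
    rw [hGg, matchNum_iso φ, matchNum_Gr, hA, hsq]
    generalize r * r = P
    omega
  have hind : indepNum Gg = (r + 3) ^ 2 - 1 := by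
    rw [hGg, indepNum_iso φ, indepNum_Gr, hA, hsq]
    generalize r * r = P
    omega
  have hann : annNum Gg = 2 * (r + 3) ^ 2 - 2 * (r + 3) := by
    rw [hGg, annNum_iso φ, annNum_Gr (le_of_eq (by ring)) (by nlinarith) (by omega),
      hA, hsq]
    generalize r * r = P
    omega
  have hedge : edgeCount Gg = 2 * (r + 3) ^ 2 - 2 := by
    rw [hGg, ← edgeCount_iso φ, edgeCount_Gr, hA, hB, hsq]
    generalize r * r = P
    omega
  have h6 : annNum Gg = indepNum Gg + (r + 2) ^ 2 := by
    rw [hann, hind, hsq, hC2]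
    generalize r * r = P
    omega
  have h9 : (1 : ℕ) ≤ (r + 3) ^ 2 := by
    rw [hsq]
    exact le_trans (by omega) (Nat.le_add_left 9 (r * r + 6 * r))
  have hcol : Gg.Colorable 2 := by
    have c : Gg.Coloring Bool :=
      SimpleGraph.Coloring.mk (fun v => col (e.symm v)) (fun hadj => col_valid hadj)
    have := c.colorable
    rwa [Fintype.card_bool] at this
  refine ⟨Gg, hcol, hmatch, hind, hann, hedge, ?_, ?_⟩
  · rw [h6]
    push_cast
    ring
  · have hsqrt : Real.sqrt (1 + (((r + 3) ^ 2 - 1 : ℕ) : ℝ)) = (r : ℝ) + 3 := by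
      have harg : (1 : ℝ) + (((r + 3) ^ 2 - 1 : ℕ) : ℝ) = ((r : ℝ) + 3) ^ 2 := by
        rw [Nat.cast_sub h9]
        push_cast
        ring
      rw [harg, Real.sqrt_sq (by positivity)]
    rw [h6, hmatch, hsqrt, Nat.cast_sub h9]
    push_cast
    ring


end AnnPaper
end
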